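/- Let α ∈ ℂ with α ≠ 0 and write x = |α|². Define c' : ℕ × ℕ → ℂ by c'(j,l) = (e^{-x/2}/(1-e^{-x})) · α^{j+l} · 2^{-(j+l)/2} · √(Nat.choose (j+l) j / (j+l)!) · (1-(-1)^l) when j+l is even, and c'(j,l) = 0 when j+l is odd. Then (i) c'(j,l) = 0 whenever j is even or l is even, and (ii) Σ_{(j,l)∈ℕ×ℕ} |c'(j,l)|² = 1. (This is the statement that for the even-coherent NOON state with anti-correlated inputs x ≠ y, both parties detect an odd photon number with probability 1, i.e. P(1,1|0,1) = P(1,1|1,0) = 1; together with the correlated case this gives the maximal GYNI value 𝒥 = 1.) -/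

import Mathlib

open scoped BigOperators

/-- For the even-coherent NOON state with anti-correlated inputs, the output Fock
coefficients vanish on even photon numbers and the state is normalized:
both parties detect an odd photon number with probability 1. -/
theorem even_coherent_NOON_anticorrelated_parity
    (α : ℂ) (hα : α ≠ 0) (x : ℝ) (hx : x = ‖α‖ ^ 2)
    (c' : ℕ × ℕ → ℂ)
    (hc_even : ∀ j l : ℕ, Even (j + l) →
      c' (j, l) = ((Real.exp (-x / 2) / (1 - Real.exp (-x)) : ℝ) : ℂ) * α ^ (j + l) *
        (((2 : ℝ) ^ (-((j + l : ℕ) : ℝ) / 2) : ℝ) : ℂ) *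
        ((Real.sqrt ((Nat.choose (j + l) j : ℝ) / (Nat.factorial (j + l) : ℝ)) : ℝ) : ℂ) *
        (1 - (-1 : ℂ) ^ l))
    (hc_odd : ∀ j l : ℕ, Odd (j + l) → c' (j, l) = 0) :
    (∀ j l : ℕ, (Even j ∨ Even l) → c' (j, l) = 0) ∧
      ∑' p : ℕ × ℕ, ‖c' p‖ ^ 2 = 1 := by
  have hx0 : 0 < x := by
    rw [hx]
    have : ‖α‖ ≠ 0 := by simpa using hα
    positivity
  set K : ℝ := Real.exp (-x / 2) / (1 - Real.exp (-x)) with hK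
  have hexlt : Real.exp (-x) < 1 := by
    rw [← Real.exp_zero]
    exact Real.exp_lt_exp.mpr (by linarith)
  have hden : (0:ℝ) < 1 - Real.exp (-x) := by linarith
  have hKpos : 0 < K := div_pos (Real.exp_pos _) hden
  -- Part (i)
  have part1 : ∀ j l : ℕ, (Even j ∨ Even l) → c' (j, l) = 0 := by
    intro j l h
    rcases Nat.even_or_odd (j + l) with he | ho
    · have hl : Even l := by
        rcases h with hj | hl
        · exact (Nat.even_add.mp he).mp hj
        · exact hl
      rw [hc_even j l he, hl.neg_one_pow]
      ring
    · exact hc_odd j l ho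
  refine ⟨part1, ?_⟩
  -- the factorized one-mode function
  set g : ℕ → ℝ := fun j => K * ((x/2)^j / j.factorial) - K * ((-(x/2))^j / j.factorial)
    with hg
  have hgsum : Summable g :=
    ((Real.summable_pow_div_factorial (x/2)).mul_left K).sub
      ((Real.summable_pow_div_factorial (-(x/2))).mul_left K)
  have hg_even : ∀ j, Even j → g j = 0 := by
    intro j hj
    simp [hg, hj.neg_pow]
  have hg_odd : ∀ j, Odd j → g j = 2 * K * ((x/2)^j / j.factorial) := by
    intro j hj
    simp only [hg, hj.neg_pow]
    ring
  have hg_nonneg : ∀ j, 0 ≤ g j := by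
    intro j
    rcases Nat.even_or_odd j with hj | hj
    · rw [hg_even j hj]
    · rw [hg_odd j hj]
      positivity
  -- key pointwise identity
  have key : ∀ p : ℕ × ℕ, ‖c' p‖ ^ 2 = g p.1 * g p.2 := by
    rintro ⟨j, l⟩
    rcases Nat.even_or_odd j with hj | hj
    · rw [part1 j l (Or.inl hj), hg_even j hj]
      simp
    rcases Nat.even_or_odd l with hl | hl
    · rw [part1 j l (Or.inr hl), hg_even l hl]
      simp
    -- both odd
    have hsum : Even (j + l) := hj.add_odd hl
    rw [hc_even j l hsum, hl.neg_one_pow]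
    have h2 : (1 : ℂ) - (-1) = 2 := by ring
    rw [h2]
    have hq0 : (0:ℝ) ≤ (Nat.choose (j + l) j : ℝ) / (Nat.factorial (j + l) : ℝ) := by
      positivity
    have habs : ‖(((K : ℝ) : ℂ) * α ^ (j + l) * (((2 : ℝ) ^ (-((j + l : ℕ) : ℝ) / 2) : ℝ) : ℂ) *
          ((Real.sqrt ((Nat.choose (j + l) j : ℝ) / (Nat.factorial (j + l) : ℝ)) : ℝ) : ℂ) * 2)‖
        = K * (‖α‖) ^ (j + l) * ((2 : ℝ) ^ (-((j + l : ℕ) : ℝ) / 2)) *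
          Real.sqrt ((Nat.choose (j + l) j : ℝ) / (Nat.factorial (j + l) : ℝ)) * 2 := by
      simp [map_mul, map_pow, Complex.norm_real, abs_of_nonneg hKpos.le,
        abs_of_nonneg (Real.rpow_nonneg (by norm_num : (0:ℝ) ≤ 2) _),
        abs_of_nonneg (Real.sqrt_nonneg _)]
    rw [habs]
    have hXpow : ((‖α‖) ^ (j + l)) ^ 2 = x ^ (j + l) := by
      rw [hx, ← pow_mul, ← pow_mul, Nat.mul_comm]
    have hrpow : ((2 : ℝ) ^ (-((j + l : ℕ) : ℝ) / 2)) ^ 2 = ((2:ℝ) ^ (j + l))⁻¹ := by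
      rw [← Real.rpow_natCast ((2:ℝ) ^ (-((j + l : ℕ) : ℝ) / 2)) 2,
        ← Real.rpow_mul (by norm_num : (0:ℝ) ≤ 2)]
      have harg : -((j + l : ℕ) : ℝ) / 2 * ((2:ℕ):ℝ) = -((j + l : ℕ) : ℝ) := by
        push_cast; ring
      rw [harg, Real.rpow_neg (by norm_num : (0:ℝ) ≤ 2), Real.rpow_natCast]
    have hsqrt : (Real.sqrt ((Nat.choose (j + l) j : ℝ) / (Nat.factorial (j + l) : ℝ))) ^ 2
        = (Nat.choose (j + l) j : ℝ) / (Nat.factorial (j + l) : ℝ) := Real.sq_sqrt hq0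
    have hchoose : (Nat.choose (j + l) j : ℝ) / (Nat.factorial (j + l) : ℝ)
        = 1 / ((Nat.factorial j : ℝ) * (Nat.factorial l : ℝ)) := by
      have hn : Nat.choose (j + l) j * Nat.factorial j * Nat.factorial l
          = Nat.factorial (j + l) := by
        have := Nat.choose_mul_factorial_mul_factorial (Nat.le_add_right j l)
        simpa [Nat.add_sub_cancel_left] using this
      have hfj : (Nat.factorial j : ℝ) ≠ 0 := Nat.cast_ne_zero.mpr (Nat.factorial_ne_zero j)
      have hfl : (Nat.factorial l : ℝ) ≠ 0 := Nat.cast_ne_zero.mpr (Nat.factorial_ne_zero l)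
      have hfn : (Nat.factorial (j + l) : ℝ) ≠ 0 :=
        Nat.cast_ne_zero.mpr (Nat.factorial_ne_zero (j + l))
      field_simp
      exact_mod_cast hn
    rw [hg_odd j hj, hg_odd l hl]
    have hfj : (Nat.factorial j : ℝ) ≠ 0 := Nat.cast_ne_zero.mpr (Nat.factorial_ne_zero j)
    have hfl : (Nat.factorial l : ℝ) ≠ 0 := Nat.cast_ne_zero.mpr (Nat.factorial_ne_zero l)
    have expand : (K * (‖α‖) ^ (j + l) * ((2 : ℝ) ^ (-((j + l : ℕ) : ℝ) / 2)) *
          Real.sqrt ((Nat.choose (j + l) j : ℝ) / (Nat.factorial (j + l) : ℝ)) * 2) ^ 2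
        = K^2 * ((‖α‖) ^ (j + l))^2 * (((2 : ℝ) ^ (-((j + l : ℕ) : ℝ) / 2)))^2 *
          (Real.sqrt ((Nat.choose (j + l) j : ℝ) / (Nat.factorial (j + l) : ℝ)))^2 * 4 := by
      ring
    rw [expand, hXpow, hrpow, hsqrt, hchoose, pow_add]
    field_simp
    have h2j : ((1:ℝ)/2)^j * 2^j = 1 := by rw [← mul_pow]; norm_num
    have h2l : ((1:ℝ)/2)^l * 2^l = 1 := by rw [← mul_pow]; norm_num
    linear_combination (-(x^j*x^l*4)) * h2j - (x^j*x^l*4*(((1:ℝ)/2)^j*2^j)) * h2l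
  -- sum
  calc ∑' p : ℕ × ℕ, ‖c' p‖ ^ 2
      = ∑' p : ℕ × ℕ, g p.1 * g p.2 := tsum_congr key
    _ = (∑' j, g j) * (∑' j, g j) :=
        (Summable.tsum_mul_tsum hgsum hgsum (hgsum.mul_of_nonneg hgsum hg_nonneg hg_nonneg)).symm
    _ = 1 := by
        have hexp : ∀ y : ℝ, ∑' n : ℕ, y ^ n / n.factorial = Real.exp y := by
          intro y
          rw [Real.exp_eq_exp_ℝ, NormedSpace.exp_eq_tsum_div]
        have hgs : ∑' j, g j = K * Real.exp (x/2) - K * Real.exp (-(x/2)) := by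
          rw [hg, Summable.tsum_sub (((Real.summable_pow_div_factorial (x/2)).mul_left K))
            (((Real.summable_pow_div_factorial (-(x/2))).mul_left K)),
            tsum_mul_left, tsum_mul_left, hexp, hexp]
        rw [hgs]
        have h1 : Real.exp (-x/2) * Real.exp (x/2) = 1 := by
          rw [← Real.exp_add, show -x/2 + x/2 = 0 by ring, Real.exp_zero]
        have h2 : Real.exp (-x/2) * Real.exp (-(x/2)) = Real.exp (-x) := by
          rw [← Real.exp_add, show -x/2 + -(x/2) = -x by ring]
        have hKey : K * Real.exp (x/2) - K * Real.exp (-(x/2)) = 1 := by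
          rw [hK, div_mul_eq_mul_div, div_mul_eq_mul_div, div_sub_div_same,
            div_eq_one_iff_eq (by linarith : (1:ℝ) - Real.exp (-x) ≠ 0)]
          rw [h1, h2]
        rw [hKey]; norm_num
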